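/- Let D be a complete, cocomplete, extremally co-well-powered, (extremal epi, mono) category. Then QD is complete and cocomplete; limits in QD are formed by taking the limit of the underlying diagram in D and endowing it with the reduced pull back filtration determined by the limit cone, and colimits are formed by taking the colimit of the underlying diagram in D and endowing it with the push forward filtration determined by the colimit cocone. -/

import Mathlib

open CategoryTheory CategoryTheory.Limits

universe w v u v₂ u₂

namespace FilteredCats

variable {D : Type u} [Category.{v} D]

/-- The class of morphisms of `D` with source `X`. -/
def MorFrom (X : D) : Type (max u v) := Σ Y : D, X ⟶ Y

/-- `Dom δ₁ δ₂` means `δ₁ ≥ δ₂`: there is `h` with `h ∘ δ₁ = δ₂`. -/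
def Dom {X : D} (δ₁ δ₂ : MorFrom X) : Prop :=
  ∃ h : δ₁.1 ⟶ δ₂.1, δ₁.2 ≫ h = δ₂.2

/-- A projective filtration on `X`: a nonempty, directed, saturated class of
morphisms with source `X`. -/
structure ProjFilt (X : D) where
  carrier : Set (MorFrom X)
  nonempty' : carrier.Nonempty
  directed' : ∀ δ₁ ∈ carrier, ∀ δ₂ ∈ carrier, ∃ δ ∈ carrier, Dom δ δ₁ ∧ Dom δ δ₂
  saturated' : ∀ δ₁ ∈ carrier, ∀ δ₂, Dom δ₁ δ₂ → δ₂ ∈ carrier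

/-- The pull back of a set of morphisms with source `X` along `f : X' ⟶ X`. -/
def pullSet {X' X : D} (f : X' ⟶ X) (S : Set (MorFrom X)) : Set (MorFrom X') :=
  {δ' | ∃ δ ∈ S, δ' = ⟨δ.1, f ≫ δ.2⟩}

/-- The pull back of a projective filtration along `f : X' ⟶ X`. -/
def ProjFilt.pull {X' X : D} (f : X' ⟶ X) (P : ProjFilt X) : ProjFilt X' where
  carrier := pullSet f P.carrier
  nonempty' := by
    obtain ⟨δ, hδ⟩ := P.nonempty'
    exact ⟨⟨δ.1, f ≫ δ.2⟩, δ, hδ, rfl⟩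
  directed' := by
    rintro _ ⟨δ₁, h₁, rfl⟩ _ ⟨δ₂, h₂, rfl⟩
    obtain ⟨δ, hδ, ⟨g₁, hg₁⟩, ⟨g₂, hg₂⟩⟩ := P.directed' δ₁ h₁ δ₂ h₂
    exact ⟨⟨δ.1, f ≫ δ.2⟩, ⟨δ, hδ, rfl⟩,
      ⟨g₁, by simp [hg₁]⟩, ⟨g₂, by simp [hg₂]⟩⟩
  saturated' := by
    rintro _ ⟨δ, hδ, rfl⟩ δ₂ ⟨h, hh⟩
    refine ⟨⟨δ₂.1, δ.2 ≫ h⟩, P.saturated' δ hδ _ ⟨h, rfl⟩, ?_⟩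
    obtain ⟨Y₂, g₂⟩ := δ₂
    have hg : g₂ = f ≫ (δ.2 ≫ h) := by simpa using hh.symm
    exact Sigma.ext rfl (heq_of_eq hg)

/-- A projectively filtered object of `D`. -/
structure PObj (D : Type u) [Category.{v} D] where
  base : D
  filt : ProjFilt base

/-- A morphism of projectively filtered objects: a morphism of the underlying
objects such that the pull back of the target filtration is contained in the
source filtration. -/
structure PHom (A B : PObj D) : Type v where
  toHom : A.base ⟶ B.base
  mem : ∀ δ ∈ B.filt.carrier, (⟨δ.1, toHom ≫ δ.2⟩ : MorFrom A.base) ∈ A.filt.carrier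

theorem PHom.ext' {A B : PObj D} {f g : PHom A B} (h : f.toHom = g.toHom) : f = g := by
  cases f; cases g; cases h; rfl

instance : Category.{v} (PObj D) where
  Hom := PHom
  id A := ⟨𝟙 A.base, fun δ hδ => by simp only [Category.id_comp]; exact hδ⟩
  comp {A B C} f g := ⟨f.toHom ≫ g.toHom, fun δ hδ => by
    have h1 := g.mem δ hδ
    have h2 := f.mem _ h1
    simpa using h2⟩
  id_comp f := PHom.ext' (Category.id_comp _)
  comp_id f := PHom.ext' (Category.comp_id _)
  assoc f g h := PHom.ext' (Category.assoc _ _ _)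

@[simp] theorem PObj.id_toHom (A : PObj D) : PHom.toHom (𝟙 A) = 𝟙 A.base := rfl
@[simp] theorem PObj.comp_toHom {A B C : PObj D} (f : A ⟶ B) (g : B ⟶ C) :
    PHom.toHom (f ≫ g) = PHom.toHom f ≫ PHom.toHom g := rfl

/-- The forgetful functor `PD → D`. -/
def Pforget (D : Type u) [Category.{v} D] : PObj D ⥤ D where
  obj A := A.base
  map f := PHom.toHom f

/-- The discrete filtration functor `D → PD`, `X ↦ (X, M(X))`. -/
def Pdiscrete (D : Type u) [Category.{v} D] : D ⥤ PObj D where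
  obj X :=
    { base := X
      filt :=
        { carrier := Set.univ
          nonempty' := ⟨⟨X, 𝟙 X⟩, trivial⟩
          directed' := fun δ₁ _ δ₂ _ =>
            ⟨⟨X, 𝟙 X⟩, trivial, ⟨δ₁.2, Category.id_comp _⟩, ⟨δ₂.2, Category.id_comp _⟩⟩
          saturated' := fun _ _ _ _ => trivial } }
  map f := ⟨f, fun _ _ => trivial⟩

/-- The functor `PD → PE` induced by a functor `G : D → E`. -/
def Pfunctor {E : Type u₂} [Category.{v₂} E] (G : D ⥤ E) : PObj D ⥤ PObj E where
  obj A :=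
    { base := G.obj A.base
      filt :=
        { carrier := {δ' | ∃ δ ∈ A.filt.carrier,
            Dom (⟨G.obj δ.1, G.map δ.2⟩ : MorFrom (G.obj A.base)) δ'}
          nonempty' := by
            obtain ⟨δ, hδ⟩ := A.filt.nonempty'
            exact ⟨⟨G.obj δ.1, G.map δ.2⟩, δ, hδ, ⟨𝟙 _, Category.comp_id _⟩⟩
          directed' := by
            rintro δ'₁ ⟨δ₁, h₁, g₁, hg₁⟩ δ'₂ ⟨δ₂, h₂, g₂, hg₂⟩
            obtain ⟨δ, hδ, ⟨k₁, hk₁⟩, ⟨k₂, hk₂⟩⟩ := A.filt.directed' δ₁ h₁ δ₂ h₂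
            refine ⟨⟨G.obj δ.1, G.map δ.2⟩, ⟨δ, hδ, ⟨𝟙 _, Category.comp_id _⟩⟩,
              ⟨G.map k₁ ≫ g₁, ?_⟩, ⟨G.map k₂ ≫ g₂, ?_⟩⟩
            · rw [← Category.assoc, ← G.map_comp, hk₁, hg₁]
            · rw [← Category.assoc, ← G.map_comp, hk₂, hg₂]
          saturated' := by
            rintro δ'₁ ⟨δ, hδ, g, hg⟩ δ'₂ ⟨h, hh⟩
            exact ⟨δ, hδ, ⟨g ≫ h, by rw [← Category.assoc, hg, hh]⟩⟩ } }
  map {A B} f :=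
    ⟨G.map (PHom.toHom f), by
      rintro δ' ⟨δ, hδ, g, hg⟩
      exact ⟨⟨δ.1, PHom.toHom f ≫ δ.2⟩, f.mem δ hδ,
        ⟨g, by rw [← hg, ← Category.assoc, ← G.map_comp]⟩⟩⟩
  map_id A := PHom.ext' (G.map_id _)
  map_comp f g := PHom.ext' (G.map_comp _ _)

/-- An extremal epimorphism: an epimorphism such that in any factorisation
through a monomorphism, the monomorphism is an isomorphism. -/
def ExtremalEpi {C : Type u₂} [Category.{v₂} C] {X Y : C} (e : X ⟶ Y) : Prop :=
  Epi e ∧ ∀ ⦃Z : C⦄ (g : X ⟶ Z) (m : Z ⟶ Y), Mono m → g ≫ m = e → IsIso m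

/-- An (extremal epi, mono) category: every morphism factors as an extremal
epimorphism followed by a monomorphism and such factorisations have the
diagonal fill-in property. -/
structure EMCat (C : Type u₂) [Category.{v₂} C] : Prop where
  fact : ∀ {X Y : C} (f : X ⟶ Y), ∃ (Z : C) (e : X ⟶ Z) (m : Z ⟶ Y),
    ExtremalEpi e ∧ Mono m ∧ e ≫ m = f
  diag : ∀ {A B Z X : C} (e : A ⟶ B) (m : Z ⟶ X) (g : A ⟶ Z) (h : B ⟶ X),
    ExtremalEpi e → Mono m → g ≫ m = e ≫ h → ∃ d : B ⟶ Z, e ≫ d = g ∧ d ≫ m = h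

/-- A projective filtration is reduced if it has an initial subclass of
extremal epimorphisms. -/
def ProjFilt.Reduced {X : D} (P : ProjFilt X) : Prop :=
  ∀ δ ∈ P.carrier, ∃ ε ∈ P.carrier, ExtremalEpi ε.2 ∧ Dom ε δ

/-- The category of reduced projectively filtered objects of `D`. -/
def QObj (D : Type u) [Category.{v} D] := ObjectProperty.FullSubcategory (fun A : PObj D => A.filt.Reduced)

instance : Category.{v} (QObj D) := ObjectProperty.FullSubcategory.category _

/-- The inclusion functor `QD → PD`. -/
def qpInclusion (D : Type u) [Category.{v} D] : QObj D ⥤ PObj D :=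
  ObjectProperty.ι _

/-- A category is extremally co-well-powered if every object has, up to
isomorphism, only a (small) set of extremal epimorphisms out of it. -/
def ECWP (C : Type u₂) [Category.{v₂} C] : Prop :=
  ∀ X : C, ∃ (ι : Type v₂) (Y : ι → C) (e : ∀ i, X ⟶ Y i),
    (∀ i, ExtremalEpi (e i)) ∧
    ∀ ⦃Z : C⦄ (f : X ⟶ Z), ExtremalEpi f → ∃ (i : ι) (φ : Y i ≅ Z), e i ≫ φ.hom = f

/-- The category `(P, D)` associated to a projective filtration: objects are the
elements of `P`, morphisms `δ₁ → δ₂` are morphisms `g` of `D` with `g ∘ δ₁ = δ₂`. -/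
def FiltCat {X : D} (P : ProjFilt X) : Type (max u v) := {δ : MorFrom X // δ ∈ P.carrier}

instance {X : D} (P : ProjFilt X) : Category.{v} (FiltCat P) where
  Hom δ₁ δ₂ := {g : δ₁.1.1 ⟶ δ₂.1.1 // δ₁.1.2 ≫ g = δ₂.1.2}
  id δ := ⟨𝟙 _, Category.comp_id _⟩
  comp f g := ⟨f.1 ≫ g.1, by rw [← Category.assoc, f.2, g.2]⟩
  id_comp f := Subtype.ext (Category.id_comp _)
  comp_id f := Subtype.ext (Category.comp_id _)
  assoc f g h := Subtype.ext (Category.assoc _ _ _)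

/-- The functor `(P, D) → D` sending an element of the filtration to its target. -/
def FiltDiagram {X : D} (P : ProjFilt X) : FiltCat P ⥤ D where
  obj δ := δ.1.1
  map g := g.1

/-- The canonical cone on the diagram of a projective filtration, with apex the
underlying object. -/
def filtCone {X : D} (P : ProjFilt X) : Limits.Cone (FiltDiagram P) where
  pt := X
  π :=
    { app := fun δ => δ.1.2
      naturality := fun δ₁ δ₂ g => by
        have := g.2
        dsimp [FiltDiagram] at *
        simp [this] }

/-- A reduced projective filtration is an iso-filtration if the canonical cone
on its diagram is a limit cone, i.e. the limit exists and the canonical morphism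
from the underlying object to it is an isomorphism. -/
def IsoFilt {X : D} (P : ProjFilt X) : Prop :=
  Nonempty (Limits.IsLimit (filtCone P))

/-- The category of iso-filtered objects of `D`. -/
def KObj (D : Type u) [Category.{v} D] :=
  ObjectProperty.FullSubcategory (fun A : QObj D => IsoFilt A.obj.filt)

instance : Category.{v} (KObj D) := ObjectProperty.FullSubcategory.category _

/-- The inclusion functor `KD → QD`. -/
def kqInclusion (D : Type u) [Category.{v} D] : KObj D ⥤ QObj D :=
  ObjectProperty.ι _

/-- The forgetful functor `KD → D`. -/
def Kforget (D : Type u) [Category.{v} D] : KObj D ⥤ D :=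
  kqInclusion D ⋙ qpInclusion D ⋙ Pforget D

/-- The smallest projective filtration containing a class of morphisms
(as a class). -/
def genSet {X : D} (S : Set (MorFrom X)) : Set (MorFrom X) :=
  {δ | ∀ P : ProjFilt X, S ⊆ P.carrier → δ ∈ P.carrier}

/-- The reduction of a class of morphisms: the saturation of the class of
extremal epimorphism parts of (extremal epi, mono)-factorisations of its
elements. -/
def redSet {X : D} (S : Set (MorFrom X)) : Set (MorFrom X) :=
  {δ | ∃ ε : MorFrom X, ExtremalEpi ε.2 ∧
    (∃ δ' ∈ S, ∃ m : ε.1 ⟶ δ'.1, Mono m ∧ ε.2 ≫ m = δ'.2) ∧ Dom ε δ}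

/-- The push forward of a filtration class along `f` (single morphism case). -/
def pushSet {X Y : D} (f : X ⟶ Y) (S : Set (MorFrom X)) : Set (MorFrom Y) :=
  {g | (⟨g.1, f ≫ g.2⟩ : MorFrom X) ∈ S}

/-- The discrete filtration on an object, as an iso-filtered object. -/
def kDiscreteObj (X : D) : KObj D where
  obj :=
    { obj := (Pdiscrete D).obj X
      property := fun δ _ => ⟨⟨X, 𝟙 X⟩, trivial,
        ⟨(inferInstance : Epi (𝟙 X)), fun _ g m hm hgm => by
          haveI : IsSplitEpi m := ⟨⟨⟨g, hgm⟩⟩⟩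
          exact isIso_of_mono_of_isSplitEpi m⟩,
        ⟨δ.2, Category.id_comp _⟩⟩ }
  property := ⟨{
    lift := fun c => c.π.app ⟨⟨X, 𝟙 X⟩, trivial⟩
    fac := fun c j => by
      have h := c.π.naturality (X := ⟨⟨X, 𝟙 X⟩, trivial⟩) (Y := j)
        ⟨j.1.2, Category.id_comp _⟩
      dsimp [FiltDiagram, filtCone] at h ⊢
      exact h.symm.trans (Category.id_comp _)
    uniq := fun c m hm => by
      have h := hm ⟨⟨X, 𝟙 X⟩, trivial⟩
      rw [← Category.comp_id m]
      exact h }⟩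

/-- The discrete filtration functor `D → KD`. -/
def kDiscrete (D : Type u) [Category.{v} D] : D ⥤ KObj D where
  obj X := kDiscreteObj X
  map f := ⟨⟨⟨f, fun _ _ => trivial⟩⟩⟩
  map_id _ := rfl
  map_comp _ _ := rfl

/-- The morphism in `KD` from an iso-filtered object to the discrete object on
the target of an element of its filtration. -/
def kToDiscrete {A : KObj D} (δ : MorFrom A.obj.obj.base)
    (hδ : δ ∈ A.obj.obj.filt.carrier) : A ⟶ kDiscreteObj δ.1 :=
  ⟨⟨show PHom A.obj.obj ((kDiscreteObj δ.1).obj.obj) from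
    ⟨δ.2, fun γ _ => A.obj.obj.filt.saturated' δ hδ _ ⟨γ.2, rfl⟩⟩⟩⟩

/-- The natural transformation `P(G) → P(H)` induced by `ν : G → H`. -/
def Pnat {E : Type u₂} [Category.{v₂} E] {G H : D ⥤ E} (ν : G ⟶ H) :
    Pfunctor G ⟶ Pfunctor H where
  app A :=
    ⟨ν.app A.base, by
      rintro δ' ⟨δ, hδ, g, hg⟩
      exact ⟨δ, hδ, ⟨ν.app δ.1 ≫ g, by
        rw [← Category.assoc, ν.naturality, Category.assoc, hg]; rfl⟩⟩⟩
  naturality {A B} f := PHom.ext' (ν.naturality (PHom.toHom f))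


/-! ### Auxiliary material for Statement 13 -/

theorem dom_refl {X : D} (δ : MorFrom X) : Dom δ δ := ⟨𝟙 _, Category.comp_id _⟩

theorem dom_trans {X : D} {a b c : MorFrom X} (h₁ : Dom a b) (h₂ : Dom b c) : Dom a c := by
  obtain ⟨g, hg⟩ := h₁; obtain ⟨k, hk⟩ := h₂
  exact ⟨g ≫ k, by rw [← Category.assoc, hg, hk]⟩

theorem morFrom_eq {X Y : D} {f g : X ⟶ Y} (h : f = g) :
    (⟨Y, f⟩ : MorFrom X) = ⟨Y, g⟩ := by rw [h]

@[simp] theorem QObj.comp_toHom {A B C : QObj D} (f : A ⟶ B) (g : B ⟶ C) :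
    PHom.toHom (f ≫ g).hom = PHom.toHom f.hom ≫ PHom.toHom g.hom := rfl

@[simp] theorem QObj.id_toHom (A : QObj D) :
    PHom.toHom (InducedCategory.Hom.hom (𝟙 A)) = 𝟙 A.obj.base := rfl

theorem QObj.hom_ext {A B : QObj D} {f g : A ⟶ B}
    (h : PHom.toHom f.hom = PHom.toHom g.hom) : f = g := by
  exact InducedCategory.hom_ext (PHom.ext' h)

theorem terminal_mem [Limits.HasTerminal D] {X : D} (P : ProjFilt X) :
    (⟨⊤_ D, Limits.terminal.from X⟩ : MorFrom X) ∈ P.carrier := by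
  obtain ⟨δ, hδ⟩ := P.nonempty'
  exact P.saturated' δ hδ _ ⟨Limits.terminal.from δ.1, Limits.terminal.comp_from δ.2⟩

theorem pair_mem [Limits.HasBinaryProducts D] {X : D} (P : ProjFilt X) {δ₁ δ₂ : MorFrom X}
    (h₁ : δ₁ ∈ P.carrier) (h₂ : δ₂ ∈ P.carrier) :
    (⟨δ₁.1 ⨯ δ₂.1, Limits.prod.lift δ₁.2 δ₂.2⟩ : MorFrom X) ∈ P.carrier := by
  obtain ⟨δ, hδ, ⟨g₁, hg₁⟩, ⟨g₂, hg₂⟩⟩ := P.directed' δ₁ h₁ δ₂ h₂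
  exact P.saturated' δ hδ _
    ⟨Limits.prod.lift g₁ g₂, by rw [Limits.prod.comp_lift, hg₁, hg₂]⟩

/-- The push forward filtration along a sink. -/
def sinkPush {ι : Type w} [Limits.HasTerminal D] [Limits.HasBinaryProducts D]
    {A : ι → D} {X : D} (f : ∀ i, A i ⟶ X) (Q : ∀ i, ProjFilt (A i)) : ProjFilt X where
  carrier := {g | ∀ i, (⟨g.1, f i ≫ g.2⟩ : MorFrom (A i)) ∈ (Q i).carrier}
  nonempty' := ⟨⟨⊤_ D, Limits.terminal.from X⟩, fun i => by
    rw [morFrom_eq (Limits.terminal.comp_from (f i))]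
    exact terminal_mem (Q i)⟩
  directed' := by
    intro g₁ h₁ g₂ h₂
    refine ⟨⟨g₁.1 ⨯ g₂.1, Limits.prod.lift g₁.2 g₂.2⟩, fun i => ?_,
      ⟨Limits.prod.fst, Limits.prod.lift_fst _ _⟩,
      ⟨Limits.prod.snd, Limits.prod.lift_snd _ _⟩⟩
    rw [morFrom_eq (Limits.prod.comp_lift (f i) g₁.2 g₂.2)]
    exact pair_mem (Q i) (h₁ i) (h₂ i)
  saturated' := by
    rintro g hg g' ⟨h, hh⟩ i
    refine (Q i).saturated' _ (hg i) _ ⟨h, ?_⟩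
    rw [Category.assoc, hh]

theorem sinkPush_reduced {ι : Type w} [Limits.HasTerminal D] [Limits.HasBinaryProducts D]
    (hEM : EMCat D) {A : ι → D} {X : D} (f : ∀ i, A i ⟶ X) (Q : ∀ i, ProjFilt (A i))
    (hQ : ∀ i, (Q i).Reduced) : (sinkPush f Q).Reduced := by
  intro g hg
  obtain ⟨Z, e, m, he, hm, hem⟩ := hEM.fact g.2
  refine ⟨⟨Z, e⟩, fun i => ?_, he, ⟨m, hem⟩⟩
  obtain ⟨ε, hε, hεe, ⟨h, hh⟩⟩ := hQ i _ (hg i)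
  obtain ⟨d, hd, -⟩ := hEM.diag ε.2 m (f i ≫ e) h hεe hm
    (by rw [Category.assoc, hem, hh])
  exact (Q i).saturated' ε hε _ ⟨d, hd⟩

theorem subset_genSet {X : D} (S : Set (MorFrom X)) : S ⊆ genSet S :=
  fun _ h P hP => hP h

theorem terminal_mem_genSet [Limits.HasTerminal D] {X : D} (S : Set (MorFrom X)) :
    (⟨⊤_ D, Limits.terminal.from X⟩ : MorFrom X) ∈ genSet S :=
  fun P _ => terminal_mem P

theorem pair_mem_genSet [Limits.HasBinaryProducts D] {X : D} {S : Set (MorFrom X)}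
    {δ₁ δ₂ : MorFrom X} (h₁ : δ₁ ∈ genSet S) (h₂ : δ₂ ∈ genSet S) :
    (⟨δ₁.1 ⨯ δ₂.1, Limits.prod.lift δ₁.2 δ₂.2⟩ : MorFrom X) ∈ genSet S :=
  fun P hP => pair_mem P (h₁ P hP) (h₂ P hP)

/-- The reduced pull back filtration generated by a class `S`. -/
def redGenFilt [Limits.HasTerminal D] [Limits.HasBinaryProducts D] (hEM : EMCat D)
    {X : D} (S : Set (MorFrom X)) : ProjFilt X where
  carrier := redSet (genSet S)
  nonempty' := by
    obtain ⟨Z, e, m, he, hm, hem⟩ := hEM.fact (Limits.terminal.from X)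
    exact ⟨⟨Z, e⟩, ⟨Z, e⟩, he,
      ⟨⟨⊤_ D, Limits.terminal.from X⟩, terminal_mem_genSet S, m, hm, hem⟩, dom_refl _⟩
  directed' := by
    rintro δ₁ ⟨ε₁, hε₁, ⟨g₁, hg₁, m₁, hm₁, hem₁⟩, hd₁⟩ δ₂
      ⟨ε₂, hε₂, ⟨g₂, hg₂, m₂, hm₂, hem₂⟩, hd₂⟩
    obtain ⟨Z, e, m, he, hm, hem⟩ := hEM.fact (Limits.prod.lift g₁.2 g₂.2)
    obtain ⟨d₁, hd₁', -⟩ := hEM.diag e m₁ ε₁.2 (m ≫ Limits.prod.fst) he hm₁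
      (by rw [hem₁, ← Category.assoc, hem, Limits.prod.lift_fst])
    obtain ⟨d₂, hd₂', -⟩ := hEM.diag e m₂ ε₂.2 (m ≫ Limits.prod.snd) he hm₂
      (by rw [hem₂, ← Category.assoc, hem, Limits.prod.lift_snd])
    exact ⟨⟨Z, e⟩, ⟨⟨Z, e⟩, he,
      ⟨⟨g₁.1 ⨯ g₂.1, Limits.prod.lift g₁.2 g₂.2⟩, pair_mem_genSet hg₁ hg₂, m, hm, hem⟩,
      dom_refl _⟩,
      dom_trans ⟨d₁, hd₁'⟩ hd₁, dom_trans ⟨d₂, hd₂'⟩ hd₂⟩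
  saturated' := by
    rintro δ₁ ⟨ε, hε, hf, hd⟩ δ₂ hd₂
    exact ⟨ε, hε, hf, dom_trans hd hd₂⟩

theorem redGenFilt_reduced [Limits.HasTerminal D] [Limits.HasBinaryProducts D]
    (hEM : EMCat D) {X : D} (S : Set (MorFrom X)) : (redGenFilt hEM S).Reduced := by
  rintro δ ⟨ε, hε, hf, hd⟩
  exact ⟨ε, ⟨ε, hε, hf, dom_refl _⟩, hε, hd⟩

theorem mem_redGenFilt_of_mem_genSet [Limits.HasTerminal D] [Limits.HasBinaryProducts D]
    (hEM : EMCat D) {X : D} {S : Set (MorFrom X)} {δ : MorFrom X} (h : δ ∈ genSet S) :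
    δ ∈ (redGenFilt hEM S).carrier := by
  obtain ⟨Z, e, m, he, hm, hem⟩ := hEM.fact δ.2
  exact ⟨⟨Z, e⟩, he, ⟨δ, h, m, hm, hem⟩, ⟨m, hem⟩⟩

section Constructions

variable {J : Type v} [SmallCategory J]

/-- The underlying diagram in `D`. -/
def Fbase (F : J ⥤ QObj D) : J ⥤ D := F ⋙ qpInclusion D ⋙ Pforget D

variable [Limits.HasLimits D] [Limits.HasColimits D] (hEM : EMCat D) (F : J ⥤ QObj D)

/-- The colimit object in `QD`. -/
noncomputable def colimPt : QObj D :=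
  ⟨⟨colimit (Fbase F),
    sinkPush (A := fun j => (F.obj j).obj.base) (fun j => colimit.ι (Fbase F) j)
      (fun j => (F.obj j).obj.filt)⟩,
   sinkPush_reduced hEM _ _ (fun j => (F.obj j).property)⟩

/-- The colimit cocone in `QD`. -/
noncomputable def colimCocone : Limits.Cocone F where
  pt := colimPt hEM F
  ι :=
    { app := fun j => ⟨⟨colimit.ι (Fbase F) j, fun δ hδ => hδ j⟩⟩
      naturality := fun j j' f => QObj.hom_ext (by
        simp only [Functor.const_obj_obj, Functor.const_obj_map, QObj.comp_toHom,
          QObj.id_toHom, Category.comp_id]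
        exact colimit.w (Fbase F) f) }

/-- The colimit cocone is a colimit. -/
noncomputable def colimIsColimit : Limits.IsColimit (colimCocone hEM F) where
  desc s :=
    ⟨⟨colimit.desc (Fbase F) ((qpInclusion D ⋙ Pforget D).mapCocone s), by
      intro δ hδ j
      have h := (s.ι.app j).hom.mem δ hδ
      have he : colimit.ι (Fbase F) j ≫
          colimit.desc (Fbase F) ((qpInclusion D ⋙ Pforget D).mapCocone s) ≫ δ.2
          = PHom.toHom (s.ι.app j).hom ≫ δ.2 := by
        exact (Category.assoc _ _ _).symm.trans (congrArg (· ≫ δ.2) (colimit.ι_desc _ j))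
      exact Eq.mpr (congrArg (· ∈ (F.obj j).obj.filt.carrier) (morFrom_eq he)) h⟩⟩
  fac s j := QObj.hom_ext (colimit.ι_desc ((qpInclusion D ⋙ Pforget D).mapCocone s) j)
  uniq s f hf := QObj.hom_ext (colimit.hom_ext fun j => by
    have := congrArg (fun f => PHom.toHom f.hom) (hf j)
    simp only [QObj.comp_toHom] at this
    exact this.trans (colimit.ι_desc ((qpInclusion D ⋙ Pforget D).mapCocone s) j).symm)

/-- The underlying cocone of the colimit cocone is a colimit in `D`. -/
noncomputable def colimMapIsColimit :
    Limits.IsColimit ((qpInclusion D ⋙ Pforget D).mapCocone (colimCocone hEM F)) :=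
  Limits.IsColimit.ofIsoColimit (colimit.isColimit (Fbase F))
    (Limits.Cocones.ext (Iso.refl _) (fun j => Category.comp_id _))

/-- The generating class for the limit filtration. -/
def limGen : Set (MorFrom (limit (Fbase F))) :=
  ⋃ j : J, pullSet (limit.π (Fbase F) j) (F.obj j).obj.filt.carrier

/-- The limit object in `QD`. -/
noncomputable def limPt : QObj D :=
  ⟨⟨limit (Fbase F), redGenFilt hEM (limGen F)⟩, redGenFilt_reduced hEM _⟩

/-- The limit cone in `QD`. -/
noncomputable def limCone : Limits.Cone F where
  pt := limPt hEM F
  π :=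
    { app := fun j => ⟨⟨limit.π (Fbase F) j, fun δ hδ =>
        mem_redGenFilt_of_mem_genSet hEM
          (subset_genSet _ (Set.mem_iUnion.2 ⟨j, ⟨δ, hδ, rfl⟩⟩))⟩⟩
      naturality := fun j j' f => QObj.hom_ext (by
        simp only [Functor.const_obj_obj, Functor.const_obj_map, QObj.comp_toHom,
          QObj.id_toHom, Category.id_comp]
        exact (limit.w (Fbase F) f).symm) }

theorem lift_mem (s : Limits.Cone F) (δ : MorFrom (limit (Fbase F)))
    (hδ : δ ∈ (limPt hEM F).obj.filt.carrier) :
    (⟨δ.1, limit.lift (Fbase F) ((qpInclusion D ⋙ Pforget D).mapCone s) ≫ δ.2⟩ :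
      MorFrom s.pt.obj.base) ∈ s.pt.obj.filt.carrier := by
  set t := limit.lift (Fbase F) ((qpInclusion D ⋙ Pforget D).mapCone s) with ht
  have key : ∀ δ' ∈ genSet (limGen F),
      (⟨δ'.1, t ≫ δ'.2⟩ : MorFrom s.pt.obj.base) ∈ s.pt.obj.filt.carrier := by
    intro δ' hδ'
    refine hδ' (sinkPush (A := fun _ : PUnit.{1} => s.pt.obj.base) (fun _ => t)
      (fun _ => s.pt.obj.filt)) ?_ PUnit.unit
    rintro γ hγ
    simp only [limGen, Set.mem_iUnion] at hγ
    obtain ⟨j, δ₀, hδ₀, rfl⟩ := hγ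
    intro _
    have h1 := (s.π.app j).hom.mem δ₀ hδ₀
    have h2 : t ≫ limit.π (Fbase F) j ≫ δ₀.2 = PHom.toHom (s.π.app j).hom ≫ δ₀.2 := by
      exact (Category.assoc _ _ _).symm.trans (congrArg (· ≫ δ₀.2) (limit.lift_π _ j))
    exact Eq.mpr (congrArg (· ∈ s.pt.obj.filt.carrier) (morFrom_eq h2)) h1
  obtain ⟨ε, hε, ⟨δ', hδ', m, hm, hfac⟩, ⟨k, hk⟩⟩ := hδ
  obtain ⟨ε', hε', hεe, ⟨h', hh'⟩⟩ := s.pt.property _ (key δ' hδ')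
  obtain ⟨d, hd, -⟩ := hEM.diag ε'.2 m (t ≫ ε.2) h' hεe hm
    ((Category.assoc _ _ _).trans ((congrArg (t ≫ ·) hfac).trans hh'.symm))
  refine s.pt.obj.filt.saturated' ε' hε' _ ⟨d ≫ k, ?_⟩
  exact (Category.assoc _ _ _).symm.trans ((congrArg (· ≫ k) hd).trans
    ((Category.assoc _ _ _).trans (congrArg (t ≫ ·) hk)))

/-- The limit cone is a limit. -/
noncomputable def limIsLimit : Limits.IsLimit (limCone hEM F) where
  lift s := ⟨⟨limit.lift (Fbase F) ((qpInclusion D ⋙ Pforget D).mapCone s),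
    fun δ hδ => lift_mem hEM F s δ hδ⟩⟩
  fac s j := QObj.hom_ext (limit.lift_π ((qpInclusion D ⋙ Pforget D).mapCone s) j)
  uniq s f hf := QObj.hom_ext (limit.hom_ext fun j => by
    have := congrArg (fun f => PHom.toHom f.hom) (hf j)
    simp only [QObj.comp_toHom] at this
    exact this.trans (limit.lift_π ((qpInclusion D ⋙ Pforget D).mapCone s) j).symm)

/-- The underlying cone of the limit cone is a limit in `D`. -/
noncomputable def limMapIsLimit :
    Limits.IsLimit ((qpInclusion D ⋙ Pforget D).mapCone (limCone hEM F)) :=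
  Limits.IsLimit.ofIsoLimit (limit.isLimit (Fbase F))
    (Limits.Cones.ext (Iso.refl _) (fun j => (Category.id_comp _).symm))

end Constructions

/-- `QD` is complete and cocomplete; limits are formed by taking
the limit in `D` with the reduced pull back filtration determined by the limit
cone, and colimits by taking the colimit in `D` with the push forward
filtration determined by the colimit cocone. -/
theorem qobj_complete_cocomplete [Limits.HasLimits D] [Limits.HasColimits D]
    (hecwp : ECWP D) (hEM : EMCat D) :
    Limits.HasLimits (QObj D) ∧
    Limits.HasColimits (QObj D) ∧
    (∀ (J : Type v) [SmallCategory J] (F : J ⥤ QObj D),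
      ∃ c : Limits.Cone F, Nonempty (Limits.IsLimit c) ∧
        Nonempty (Limits.IsLimit ((qpInclusion D ⋙ Pforget D).mapCone c)) ∧
        c.pt.obj.filt.carrier =
          redSet (genSet (⋃ j : J,
            pullSet (PHom.toHom (c.π.app j).hom) (F.obj j).obj.filt.carrier))) ∧
    (∀ (J : Type v) [SmallCategory J] (F : J ⥤ QObj D),
      ∃ c : Limits.Cocone F, Nonempty (Limits.IsColimit c) ∧
        Nonempty (Limits.IsColimit ((qpInclusion D ⋙ Pforget D).mapCocone c)) ∧
        c.pt.obj.filt.carrier =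
          {g : MorFrom c.pt.obj.base | ∀ j : J,
            (⟨g.1, PHom.toHom (c.ι.app j).hom ≫ g.2⟩ : MorFrom (F.obj j).obj.base)
              ∈ (F.obj j).obj.filt.carrier}) := by
  refine ⟨?_, ?_, ?_, ?_⟩
  · exact { has_limits_of_shape := fun J _ =>
      { has_limit := fun F => Limits.HasLimit.mk ⟨limCone hEM F, limIsLimit hEM F⟩ } }
  · exact { has_colimits_of_shape := fun J _ =>
      { has_colimit := fun F => Limits.HasColimit.mk ⟨colimCocone hEM F, colimIsColimit hEM F⟩ } }
  · intro J _ F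
    exact ⟨limCone hEM F, ⟨limIsLimit hEM F⟩, ⟨limMapIsLimit hEM F⟩, rfl⟩
  · intro J _ F
    exact ⟨colimCocone hEM F, ⟨colimIsColimit hEM F⟩, ⟨colimMapIsColimit hEM F⟩, rfl⟩

end FilteredCats
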